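/- Fix α > 0, ε > 0, Δ > 0, and w_0 ∈ ℝ, and assume the deterministic sign dynamics u_{n+1} = u_n − α·sign(u_n) started at u_0 = w_0 satisfies |u_n| ≥ ε + Δ for all n ≥ 0 (the step grid misses the target interval with margin Δ). For each σ ≥ 0 let (w_n^{(σ)}) be the noisy sign dynamics started at w_0 driven by the same i.i.d. standard Gaussian sequence (ξ_n), and let T_ε^{(σ)} = inf{n ≥ 0 : |w_n^{(σ)}| ≤ ε}. Then for every positive integer N: lim_{σ→0} P(T_ε^{(σ)} > N) = 1 and lim_{σ→∞} P(T_ε^{(σ)} > N) = 1. -/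

import Mathlib

open MeasureTheory ProbabilityTheory Filter Real
open scoped ENNReal

/-- The sign function: `1` if `x > 0`, `-1` if `x < 0`, `0` if `x = 0`. -/
noncomputable def sgn (x : ℝ) : ℝ := if 0 < x then 1 else if x < 0 then -1 else 0

lemma sgn_eq_one {x : ℝ} (h : 0 < x) : sgn x = 1 := if_pos h

lemma sgn_eq_neg_one {x : ℝ} (h : x < 0) : sgn x = -1 := by
  unfold sgn; rw [if_neg (by linarith), if_pos h]

lemma measurable_sgn : Measurable sgn := by
  unfold sgn
  apply Measurable.ite (measurableSet_lt measurable_const measurable_id) measurable_const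
  exact Measurable.ite (measurableSet_lt measurable_id measurable_const) measurable_const
    measurable_const

lemma sgn_eq_sgn {a b δ : ℝ} (hδ : 0 < δ) (ha : δ ≤ |a|) (hab : |b - a| < δ) :
    sgn b = sgn a := by
  rcases lt_trichotomy a 0 with h | h | h
  · rw [abs_of_neg h] at ha
    have hb : b < 0 := by have := (abs_lt.mp hab).2; linarith
    rw [sgn_eq_neg_one hb, sgn_eq_neg_one h]
  · simp [h] at ha; linarith
  · rw [abs_of_pos h] at ha
    have hb : 0 < b := by have := (abs_lt.mp hab).1; linarith
    rw [sgn_eq_one hb, sgn_eq_one h]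

lemma gaussian_Icc_bound (l r : ℝ) :
    gaussianReal 0 1 (Set.Icc l r) ≤ ENNReal.ofReal ((Real.sqrt (2*Real.pi))⁻¹ * (r - l)) := by
  rw [gaussianReal_apply 0 one_ne_zero]
  have hb : ∀ x : ℝ, gaussianPDF 0 1 x ≤ ENNReal.ofReal ((Real.sqrt (2*Real.pi))⁻¹) := by
    intro x
    unfold gaussianPDF gaussianPDFReal
    apply ENNReal.ofReal_le_ofReal
    have h1 : Real.exp (-(x - 0)^2 / (2 * (1:NNReal))) ≤ 1 := by
      rw [Real.exp_le_one_iff]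
      have : (0:ℝ) ≤ (x - 0)^2 := sq_nonneg _
      simp only [NNReal.coe_one]
      nlinarith
    have h2 : (0:ℝ) ≤ (Real.sqrt (2 * Real.pi * (1:NNReal)))⁻¹ := by positivity
    calc (Real.sqrt (2 * Real.pi * (1:NNReal)))⁻¹ * Real.exp (-(x - 0)^2 / (2 * (1:NNReal)))
        ≤ (Real.sqrt (2 * Real.pi * (1:NNReal)))⁻¹ * 1 := by nlinarith
      _ = (Real.sqrt (2 * Real.pi))⁻¹ := by norm_num
  calc ∫⁻ x in Set.Icc l r, gaussianPDF 0 1 x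
      ≤ ∫⁻ _ in Set.Icc l r, ENNReal.ofReal ((Real.sqrt (2*Real.pi))⁻¹) :=
        lintegral_mono hb
    _ = ENNReal.ofReal ((Real.sqrt (2*Real.pi))⁻¹) * volume (Set.Icc l r) := by
        rw [setLIntegral_const]
    _ ≤ ENNReal.ofReal ((Real.sqrt (2*Real.pi))⁻¹ * (r - l)) := by
        rw [Real.volume_Icc, ← ENNReal.ofReal_mul (by positivity)]



lemma indep_step_bound {Ω : Type*} [MeasurableSpace Ω] (P : Measure Ω) [IsProbabilityMeasure P]
    (B X : Ω → ℝ) (hB : Measurable B) (hX : Measurable X)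
    (hXd : Measure.map X P = gaussianReal 0 1) (hind : IndepFun B X P)
    (c ε : ℝ) (hc : 0 < c) :
    P {ω | |B ω - c * X ω| ≤ ε} ≤ ENNReal.ofReal ((Real.sqrt (2*Real.pi))⁻¹ * (2*ε/c)) := by
  set s : Set (ℝ×ℝ) := {p | |p.1 - c * p.2| ≤ ε} with hs_def
  have hs : MeasurableSet s := by
    have hm : Measurable fun p : ℝ×ℝ => |p.1 - c*p.2| :=
      (measurable_fst.sub (measurable_snd.const_mul c)).abs
    exact measurableSet_le hm measurable_const
  have hmap : Measure.map (fun ω => (B ω, X ω)) P = (Measure.map B P).prod (Measure.map X P) :=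
    (indepFun_iff_map_prod_eq_prod_map_map hB.aemeasurable hX.aemeasurable).mp hind
  have hev : {ω | |B ω - c * X ω| ≤ ε} = (fun ω => (B ω, X ω)) ⁻¹' s := rfl
  rw [hev, ← Measure.map_apply (hB.prodMk hX) hs, hmap, hXd, Measure.prod_apply hs]
  have hsec : ∀ b : ℝ, (Prod.mk b ⁻¹' s) = Set.Icc ((b - ε)/c) ((b + ε)/c) := by
    intro b
    ext x
    simp only [Set.mem_preimage, hs_def, Set.mem_setOf_eq, Set.mem_Icc, abs_le,
      div_le_iff₀ hc, le_div_iff₀ hc]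
    constructor <;> intro h <;> constructor <;> nlinarith [h.1, h.2]
  have hlen : ∀ b : ℝ, (b + ε)/c - (b - ε)/c = 2*ε/c := by intro b; field_simp; ring
  calc ∫⁻ b, gaussianReal 0 1 (Prod.mk b ⁻¹' s) ∂(Measure.map B P)
      ≤ ∫⁻ _, ENNReal.ofReal ((Real.sqrt (2*Real.pi))⁻¹ * (2*ε/c)) ∂(Measure.map B P) := by
        apply lintegral_mono
        intro b
        have := gaussian_Icc_bound ((b - ε)/c) ((b + ε)/c)
        simp only []
        rw [hsec b, ← hlen b]
        exact this
    _ = ENNReal.ofReal ((Real.sqrt (2*Real.pi))⁻¹ * (2*ε/c)) := by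
        have : IsProbabilityMeasure (Measure.map B P) := Measure.isProbabilityMeasure_map hB.aemeasurable
        rw [lintegral_const, measure_univ, mul_one]

noncomputable def Gfun (α w0 σ : ℝ) : ℕ → (ℕ → ℝ) → ℝ
  | 0 => fun _ => w0
  | n+1 => fun x => Gfun α w0 σ n x - α * (sgn (Gfun α w0 σ n x) + σ * x (n+1))

lemma measurable_Gfun (α w0 σ : ℝ) (n : ℕ) : Measurable (Gfun α w0 σ n) := by
  induction n with
  | zero => exact measurable_const
  | succ n ih =>
    have h1 : Measurable (fun x : ℕ → ℝ => sgn (Gfun α w0 σ n x) + σ * x (n+1)) :=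
      (measurable_sgn.comp ih).add
        ((measurable_pi_apply (n+1) : Measurable fun x : ℕ → ℝ => x (n+1)).const_mul σ)
    exact ih.sub (h1.const_mul α)

lemma Gfun_congr (α w0 σ : ℝ) (n : ℕ) {x y : ℕ → ℝ} (h : ∀ k, k ≤ n → x k = y k) :
    Gfun α w0 σ n x = Gfun α w0 σ n y := by
  induction n with
  | zero => rfl
  | succ n ih =>
    have h1 := ih (fun k hk => h k (Nat.le_succ_of_le hk))
    simp only [Gfun, h1, h (n+1) le_rfl]

/-- Small- and large-noise regimes have long hitting times: if the deterministic sign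
dynamics `u` started at `w0` misses the target interval with margin `Δ`
(`|u n| ≥ ε + Δ` for all `n`), then for the noisy sign dynamics `w σ` started at `w0`
and driven by the same i.i.d. standard Gaussian sequence, for every positive integer
`N`, `P(T_ε > N) → 1` both as `σ → 0⁺` and as `σ → ∞`. -/
theorem noisy_sign_dynamics_extreme_noise_long_hitting
    {Ω : Type*} [MeasurableSpace Ω] (P : Measure Ω) [IsProbabilityMeasure P]
    (α ε Δ : ℝ) (hα : 0 < α) (hε : 0 < ε) (hΔ : 0 < Δ) (w0 : ℝ)
    (ξ : ℕ → Ω → ℝ) (hξmeas : ∀ n, Measurable (ξ n))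
    (hξdist : ∀ n, Measure.map (ξ n) P = gaussianReal 0 1)
    (hξindep : iIndepFun ξ P)
    (u : ℕ → ℝ) (hu0 : u 0 = w0)
    (hu : ∀ n, u (n + 1) = u n - α * sgn (u n))
    (humargin : ∀ n, ε + Δ ≤ |u n|)
    (w : ℝ → ℕ → Ω → ℝ)
    (hw0 : ∀ σ ω, w σ 0 ω = w0)
    (hw : ∀ σ n ω, w σ (n + 1) ω = w σ n ω - α * (sgn (w σ n ω) + σ * ξ (n + 1) ω))
    (N : ℕ) (hN : 1 ≤ N) :
    Tendsto (fun σ : ℝ => P {ω | ∀ n ≤ N, ε < |w σ n ω|})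
      (nhdsWithin 0 (Set.Ioi 0)) (nhds 1) ∧
    Tendsto (fun σ : ℝ => P {ω | ∀ n ≤ N, ε < |w σ n ω|}) atTop (nhds 1) := by
  -- generic facts
  have hincl : ∀ σ : ℝ, 0 < σ → ∀ ω, α * σ * (∑ k ∈ Finset.range N, |ξ (k+1) ω|) < Δ →
      ∀ n ≤ N, ε < |w σ n ω| := by
    intro σ hσ ω hω
    have hασ : 0 < α * σ := mul_pos hα hσ
    have key : ∀ n, n ≤ N → |w σ n ω - u n| ≤ α * σ * ∑ k ∈ Finset.range n, |ξ (k+1) ω| := by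
      intro n
      induction n with
      | zero => intro _; simp [hw0, hu0]
      | succ n ih =>
        intro hn1
        have hn : n ≤ N := Nat.le_of_succ_le hn1
        have h1 := ih hn
        have hpart : ∑ k ∈ Finset.range n, |ξ (k+1) ω| ≤ ∑ k ∈ Finset.range N, |ξ (k+1) ω| :=
          Finset.sum_le_sum_of_subset_of_nonneg (Finset.range_subset_range.mpr hn)
            (fun k _ _ => abs_nonneg _)
        have h2 : |w σ n ω - u n| < Δ :=
          lt_of_le_of_lt (h1.trans (mul_le_mul_of_nonneg_left hpart hασ.le)) hω
        have hΔu : Δ ≤ |u n| := le_trans (by linarith) (humargin n)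
        have hsgn : sgn (w σ n ω) = sgn (u n) := sgn_eq_sgn hΔ hΔu h2
        have heq : w σ (n+1) ω - u (n+1) = (w σ n ω - u n) - α*σ*ξ (n+1) ω := by
          rw [hw, hu, hsgn]; ring
        have habs : |α*σ*ξ (n+1) ω| = α*σ*|ξ (n+1) ω| := by
          rw [abs_mul, abs_mul, abs_of_pos hα, abs_of_pos hσ]
        calc |w σ (n+1) ω - u (n+1)| = |(w σ n ω - u n) - α*σ*ξ (n+1) ω| := by rw [heq]
          _ ≤ |w σ n ω - u n| + |α*σ*ξ (n+1) ω| := abs_sub _ _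
          _ ≤ α * σ * (∑ k ∈ Finset.range n, |ξ (k+1) ω|) + α*σ*|ξ (n+1) ω| := by
              rw [habs]; exact add_le_add h1 le_rfl
          _ = α * σ * ∑ k ∈ Finset.range (n+1), |ξ (k+1) ω| := by
              rw [Finset.sum_range_succ]; ring
    intro n hn
    have h1 := key n hn
    have hpart : ∑ k ∈ Finset.range n, |ξ (k+1) ω| ≤ ∑ k ∈ Finset.range N, |ξ (k+1) ω| :=
      Finset.sum_le_sum_of_subset_of_nonneg (Finset.range_subset_range.mpr hn)
        (fun k _ _ => abs_nonneg _)
    have h2 : |w σ n ω - u n| < Δ :=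
      lt_of_le_of_lt (h1.trans (mul_le_mul_of_nonneg_left hpart (mul_pos hα hσ).le)) hω
    have h3 := humargin n
    have h4 : |u n| - |w σ n ω| ≤ |u n - w σ n ω| := abs_sub_abs_le_abs_sub _ _
    rw [abs_sub_comm] at h4
    linarith
  have hwG : ∀ σ n ω, w σ n ω = Gfun α w0 σ n (fun k => ξ k ω) := by
    intro σ n
    induction n with
    | zero => intro ω; rw [hw0]; rfl
    | succ n ih => intro ω; rw [hw, ih]; rfl
  have hpi : Measurable (fun ω (k : ℕ) => ξ k ω) := measurable_pi_lambda _ hξmeas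
  have hw_meas : ∀ σ n, Measurable (fun ω => w σ n ω) := by
    intro σ n
    have h := (measurable_Gfun α w0 σ n).comp hpi
    have : (fun ω => w σ n ω) = fun ω => Gfun α w0 σ n (fun k => ξ k ω) := funext (hwG σ n)
    rw [this]; exact h
  have hindep : ∀ σ n, IndepFun (fun ω => w σ n ω - α * sgn (w σ n ω)) (ξ (n+1)) P := by
    intro σ n
    set S : Finset ℕ := Finset.range (n+1) with hS
    set T : Finset ℕ := {n+1} with hT
    have hST : Disjoint S T := by
      simp [hS, hT, Finset.disjoint_singleton_right]
    have h1 := hξindep.indepFun_finset S T hST hξmeas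
    classical
    let ext : (S → ℝ) → (ℕ → ℝ) := fun t k => if h : k ∈ S then t ⟨k, h⟩ else 0
    have hext : Measurable ext := by
      apply measurable_pi_lambda
      intro k
      by_cases h : k ∈ S
      · simp only [ext, dif_pos h]; exact measurable_pi_apply _
      · simp only [ext, dif_neg h]; exact measurable_const
    let φ : (S → ℝ) → ℝ := fun t =>
      Gfun α w0 σ n (ext t) - α * sgn (Gfun α w0 σ n (ext t))
    let ψ : (T → ℝ) → ℝ := fun t => t ⟨n+1, by simp [hT]⟩
    have hφ : Measurable φ :=
      ((measurable_Gfun α w0 σ n).comp hext).sub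
        ((measurable_sgn.comp ((measurable_Gfun α w0 σ n).comp hext)).const_mul α)
    have hψ : Measurable ψ := measurable_pi_apply _
    have h2 := h1.comp hφ hψ
    have e1 : (fun ω => w σ n ω - α * sgn (w σ n ω)) = φ ∘ (fun a (i : S) => ξ i a) := by
      funext ω
      have hG : Gfun α w0 σ n (ext (fun i : S => ξ (i : ℕ) ω)) = Gfun α w0 σ n (fun k => ξ k ω) := by
        apply Gfun_congr
        intro k hk
        have hkS : k ∈ S := Finset.mem_range.mpr (Nat.lt_succ_of_le hk)
        simp only [ext, dif_pos hkS]
      simp only [Function.comp, φ, hG, hwG σ n ω]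
    have e2 : ξ (n+1) = ψ ∘ (fun a (i : T) => ξ i a) := rfl
    rw [e1, e2]
    exact h2
  have hstep : ∀ σ : ℝ, 0 < σ → ∀ n, P {ω | |w σ (n+1) ω| ≤ ε} ≤
      ENNReal.ofReal ((Real.sqrt (2*Real.pi))⁻¹ * (2*ε/(α*σ))) := by
    intro σ hσ n
    have hB : Measurable (fun ω => w σ n ω - α * sgn (w σ n ω)) :=
      (hw_meas σ n).sub ((measurable_sgn.comp (hw_meas σ n)).const_mul α)
    have hb := indep_step_bound P _ (ξ (n+1)) hB (hξmeas (n+1)) (hξdist (n+1))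
      (hindep σ n) (α*σ) ε (mul_pos hα hσ)
    have hset : {ω | |w σ (n+1) ω| ≤ ε} =
        {ω | |(w σ n ω - α * sgn (w σ n ω)) - (α*σ) * ξ (n+1) ω| ≤ ε} := by
      ext ω
      have : w σ (n+1) ω = (w σ n ω - α * sgn (w σ n ω)) - (α*σ) * ξ (n+1) ω := by
        rw [hw]; ring
      simp [this]
    rw [hset]
    exact hb
  constructor
  · -- σ → 0⁺
    apply tendsto_order.2
    constructor
    · intro a ha
      have hmono : Monotone (fun n : ℕ => {ω | (∑ k ∈ Finset.range N, |ξ (k+1) ω|) < (n:ℝ)}) := by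
        intro i j hij
        exact Set.setOf_subset_setOf.mpr (fun ω hω => lt_of_lt_of_le hω (Nat.cast_le.mpr hij))
      have hunion : (⋃ n : ℕ, {ω | (∑ k ∈ Finset.range N, |ξ (k+1) ω|) < (n:ℝ)}) = Set.univ := by
        ext ω
        simp only [Set.mem_iUnion, Set.mem_setOf_eq, Set.mem_univ, iff_true]
        exact exists_nat_gt _
      have htend := tendsto_measure_iUnion_atTop (μ := P) hmono
      rw [hunion, measure_univ] at htend
      obtain ⟨n, hn⟩ := (htend.eventually (eventually_gt_nhds ha)).exists
      have hpos : 0 < Δ / (α * (n+1)) := div_pos hΔ (mul_pos hα (by positivity))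
      refine eventually_of_mem (Ioo_mem_nhdsGT_of_mem ⟨le_refl 0, hpos⟩) ?_
      intro σ hσ
      refine lt_of_lt_of_le hn (measure_mono ?_)
      intro ω hω
      simp only [Set.mem_setOf_eq] at hω ⊢
      apply hincl σ hσ.1 ω
      have h1 : σ * (α * ((n:ℝ)+1)) < Δ := by
        rw [Set.mem_Ioo, lt_div_iff₀ (mul_pos hα (by positivity))] at hσ
        exact hσ.2
      have h2 : 0 ≤ ∑ k ∈ Finset.range N, |ξ (k+1) ω| :=
        Finset.sum_nonneg fun k _ => abs_nonneg _
      nlinarith [hσ.1, mul_pos hα hσ.1]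
    · intro a ha
      exact Eventually.of_forall (fun σ => lt_of_le_of_lt prob_le_one ha)
  · -- σ → ∞
    apply tendsto_order.2
    refine ⟨?_, fun a ha => Eventually.of_forall (fun σ => lt_of_le_of_lt prob_le_one ha)⟩
    intro a ha
    set K := (Real.sqrt (2*Real.pi))⁻¹ * (2*ε/α) * N with hK
    have hK0 : 0 ≤ K := by positivity
    have hbound : ∀ σ : ℝ, 0 < σ →
        (1:ℝ≥0∞) - ENNReal.ofReal (K/σ) ≤ P {ω | ∀ n ≤ N, ε < |w σ n ω|} := by
      intro σ hσ
      set U := ⋃ n ∈ Finset.range N, {ω | |w σ (n+1) ω| ≤ ε} with hU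
      have hUmeas : MeasurableSet U := by
        apply Set.Finite.measurableSet_biUnion (Finset.finite_toSet _)
        intro n _
        exact measurableSet_le (hw_meas σ (n+1)).abs measurable_const
      have hsub : Uᶜ ⊆ {ω | ∀ n ≤ N, ε < |w σ n ω|} := by
        intro ω hω n hn
        match n with
        | 0 =>
          rw [hw0]
          have h := humargin 0
          rw [hu0] at h
          linarith
        | Nat.succ k =>
          have hk : k ∈ Finset.range N := Finset.mem_range.mpr (Nat.lt_of_succ_le hn)
          have hnot : ω ∉ {ω | |w σ (k+1) ω| ≤ ε} := fun hmem => hω (Set.mem_biUnion hk hmem)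
          simp only [Set.mem_setOf_eq, not_le] at hnot
          exact hnot
      have hPU : P U ≤ ENNReal.ofReal (K/σ) := by
        calc P U ≤ ∑ n ∈ Finset.range N, P {ω | |w σ (n+1) ω| ≤ ε} :=
              measure_biUnion_finset_le _ _
          _ ≤ ∑ _n ∈ Finset.range N,
                ENNReal.ofReal ((Real.sqrt (2*Real.pi))⁻¹ * (2*ε/(α*σ))) :=
              Finset.sum_le_sum (fun n _ => hstep σ hσ n)
          _ = (N:ℝ≥0∞) * ENNReal.ofReal ((Real.sqrt (2*Real.pi))⁻¹ * (2*ε/(α*σ))) := by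
              rw [Finset.sum_const, Finset.card_range, nsmul_eq_mul]
          _ = ENNReal.ofReal (K/σ) := by
              rw [← ENNReal.ofReal_natCast N, ← ENNReal.ofReal_mul (by positivity)]
              congr 1
              rw [hK]
              field_simp
      calc (1:ℝ≥0∞) - ENNReal.ofReal (K/σ) ≤ 1 - P U := tsub_le_tsub_left hPU 1
        _ = P Uᶜ := (prob_compl_eq_one_sub hUmeas).symm
        _ ≤ P {ω | ∀ n ≤ N, ε < |w σ n ω|} := measure_mono hsub
    have haT : a ≠ ⊤ := (ha.trans_le le_top).ne
    set r := a.toReal with hr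
    have hr1 : r < 1 := by
      have := (ENNReal.toReal_lt_toReal haT (by norm_num : (1:ℝ≥0∞) ≠ ⊤)).mpr ha
      simpa using this
    have hr0 : 0 ≤ r := ENNReal.toReal_nonneg
    refine eventually_atTop.mpr ⟨max 1 (2*K/(1-r) + 1), fun σ hσ => ?_⟩
    have hσ1 : 1 ≤ σ := le_trans (le_max_left _ _) hσ
    have hσpos : 0 < σ := lt_of_lt_of_le one_pos hσ1
    have hKσ : K/σ ≤ (1-r)/2 := by
      have h2 : 2*K/(1-r) + 1 ≤ σ := le_trans (le_max_right _ _) hσ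
      have h3 : 2*K/(1-r) ≤ σ := by linarith
      have h4 : 2*K ≤ σ*(1-r) := (div_le_iff₀ (by linarith : (0:ℝ) < 1-r)).mp h3
      rw [div_le_div_iff₀ hσpos (by norm_num : (0:ℝ) < 2)]
      linarith
    calc a = ENNReal.ofReal r := (ENNReal.ofReal_toReal haT).symm
      _ < ENNReal.ofReal ((1+r)/2) := by
          rw [ENNReal.ofReal_lt_ofReal_iff (by linarith)]; linarith
      _ = 1 - ENNReal.ofReal ((1-r)/2) := by
          have h5 : (1+r)/2 = 1 - (1-r)/2 := by ring
          rw [h5, ENNReal.ofReal_sub _ (by linarith), ENNReal.ofReal_one]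
      _ ≤ 1 - ENNReal.ofReal (K/σ) := tsub_le_tsub_left (ENNReal.ofReal_le_ofReal hKσ) 1
      _ ≤ P {ω | ∀ n ≤ N, ε < |w σ n ω|} := hbound σ hσpos
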